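/- arXiv:2208.08574 — 2 statements merged into one kernel-verified Lean document; each statement's English description precedes it below -/
import Mathlib

section
/- Let $\sum_n x_n$ be a conditionally convergent series of real numbers (convergent but not absolutely convergent). Then for every real number $\alpha$ and every $\epsilon > 0$, there exists a sequence $(y_n)$ with $y_n \in \{0, x_n, -x_n\}$ for each $n$ such that $\sum_n y_n$ converges and $\left|\sum_n y_n - \alpha\right| < \epsilon$. -/
open Filter Finset

/-- A conditionally convergent real series can be sign-modified (choosing each term
from `{0, xₙ, -xₙ}`) so that its sum is within `ε` of any target `α`. -/
theorem stmt_0 (x : ℕ → ℝ)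
    (hconv : ∃ l : ℝ, Tendsto (fun n => ∑ i ∈ Finset.range n, x i) atTop (nhds l))
    (hnotabs : ¬ Summable (fun n => |x n|)) (α : ℝ) (ε : ℝ) (hε : 0 < ε) :
    ∃ y : ℕ → ℝ, (∀ n, y n = 0 ∨ y n = x n ∨ y n = -x n) ∧
      ∃ S : ℝ, Tendsto (fun n => ∑ i ∈ Finset.range n, y i) atTop (nhds S) ∧ |S - α| < ε := by
  obtain ⟨l, hl⟩ := hconv
  -- terms tend to 0
  have hx0 : Tendsto x atTop (nhds 0) := by
    have h1 : Tendsto (fun n => (∑ i ∈ Finset.range (n+1), x i) - ∑ i ∈ Finset.range n, x i)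
        atTop (nhds (l - l)) := (hl.comp (tendsto_add_atTop_nat 1)).sub hl
    simpa [Finset.sum_range_succ] using h1
  have habs : Tendsto (fun n => |x n|) atTop (nhds 0) := by
    simpa using hx0.abs
  obtain ⟨M, hM⟩ := Metric.tendsto_atTop.mp habs ε hε
  have hM' : ∀ n, M ≤ n → |x n| < ε := by
    intro n hn
    have := hM n hn
    rwa [Real.dist_eq, sub_zero, abs_abs] at this
  set f : ℕ → ℝ := fun i => if M ≤ i then |x i| else 0 with hf
  have hfnonneg : ∀ i, 0 ≤ f i := by
    intro i; simp only [hf]; split <;> positivity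
  have hfns : ¬ Summable f := by
    intro hs
    apply hnotabs
    have hg : Summable (fun i => if i < M then |x i| else 0) := by
      apply summable_of_ne_finset_zero (s := Finset.range M)
      intro i hi
      simp only [Finset.mem_range, not_lt] at hi
      simp [Nat.not_lt.mpr hi]
    have hsum := hs.add hg
    apply hsum.congr
    intro i
    by_cases h : M ≤ i
    · simp [hf, h, Nat.not_lt.mpr h]
    · simp [hf, h, Nat.lt_of_not_le h]
  have htop : Tendsto (fun n => ∑ i ∈ Finset.range n, f i) atTop atTop :=
    (not_summable_iff_tendsto_nat_atTop_of_nonneg hfnonneg).mp hfns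
  have hPex : ∃ n, |α| < ∑ i ∈ Finset.range n, f i := (htop.eventually_gt_atTop |α|).exists
  classical
  have hNspec : |α| < ∑ i ∈ Finset.range (Nat.find hPex), f i := Nat.find_spec hPex
  have hNpos : 0 < Nat.find hPex := by
    rcases Nat.eq_zero_or_pos (Nat.find hPex) with h | h
    · exfalso; rw [h] at hNspec; simp at hNspec
      exact absurd hNspec (not_lt.mpr (abs_nonneg α))
    · exact h
  obtain ⟨N', hNeq⟩ : ∃ N', Nat.find hPex = N' + 1 :=
    ⟨Nat.find hPex - 1, (Nat.succ_pred_eq_of_pos hNpos).symm⟩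
  rw [hNeq] at hNspec
  have hN'le : ∑ i ∈ Finset.range N', f i ≤ |α| := by
    have := Nat.find_min hPex (m := N') (by omega)
    exact not_lt.mp this
  have hsplit : ∑ i ∈ Finset.range (N' + 1), f i = (∑ i ∈ Finset.range N', f i) + f N' :=
    Finset.sum_range_succ f N'
  have hfN'pos : 0 < f N' := by
    by_contra h
    have : f N' = 0 := le_antisymm (not_lt.mp h) (hfnonneg N')
    rw [hsplit, this, add_zero] at hNspec
    exact absurd hNspec (not_lt.mpr hN'le)
  have hMN' : M ≤ N' := by
    by_contra h
    simp [hf, h] at hfN'pos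
  have hfN'lt : f N' < ε := by
    simp only [hf, if_pos hMN']
    exact hM' N' hMN'
  set T := ∑ i ∈ Finset.range (N' + 1), f i with hT
  have hTub : T < |α| + ε := by
    have h1 := hsplit
    linarith
  set c : ℝ := if 0 ≤ α then 1 else -1 with hc
  refine ⟨fun i => if i < N' + 1 then c * f i else 0, ?_, c * T, ?_, ?_⟩
  · intro n
    by_cases h1 : n < N' + 1
    · simp only [if_pos h1]
      by_cases h2 : M ≤ n
      · simp only [hf, if_pos h2]
        rcases abs_choice (x n) with h3 | h3 <;> rw [h3] <;>
          by_cases h4 : 0 ≤ α <;> simp [hc, h4] <;> tauto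
      · left; simp [hf, h2]
    · left; simp [h1]
  · have hev : ∀ᶠ n in atTop, ∑ i ∈ Finset.range n,
        (if i < N' + 1 then c * f i else 0) = c * T := by
      filter_upwards [eventually_ge_atTop (N' + 1)] with n hn
      rw [hT, Finset.mul_sum]
      rw [← Finset.sum_subset (Finset.range_subset_range.mpr hn)
        (fun i _ hi => by simp [Finset.mem_range, not_lt.mp (fun h => hi (Finset.mem_range.mpr h))]; intro h; exact absurd (Finset.mem_range.mpr (by omega)) hi)]
      apply Finset.sum_congr rfl
      intro i hi
      rw [if_pos (Finset.mem_range.mp hi)]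
    exact Tendsto.congr' (hev.mono fun n h => h.symm) tendsto_const_nhds
  · by_cases h4 : 0 ≤ α
    · rw [hc, if_pos h4, one_mul]
      rw [abs_of_nonneg h4] at hNspec hTub
      rw [abs_sub_lt_iff]
      constructor <;> linarith
    · rw [hc, if_neg h4, neg_one_mul]
      push_neg at h4
      rw [abs_of_neg h4] at hNspec hTub
      rw [abs_sub_lt_iff]
      constructor <;> linarith
end

section
/- Fix constants $c, c_0, C > 0$ with $6 C c c_0 \le e^{-1}$. For $N$ large, set $M = \lfloor \frac{\log N}{c \log\log N} \rfloor$ and let $k \le c_0 \frac{\log N}{(\log\log N)^2}$. Then $\sum_{m > M} \frac{(2k)^m}{m!} (C \log m)^m \ll e^{-M}$, where the implied constant is absolute. -/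
open Real Filter

def stmt17_equiv (M : ℕ) : ℕ ≃ {m : ℕ // M < m} where
  toFun n := ⟨n + M + 1, by omega⟩
  invFun m := m.1 - (M + 1)
  left_inv n := by dsimp; omega
  right_inv m := by have := m.2; ext; dsimp; omega

lemma stmt17_geom (M : ℕ) :
    (∑' m : {m : ℕ // M < m}, ((1:ℝ)/3) ^ (m : ℕ)) ≤ Real.exp (-(M:ℝ)) := by
  rw [← Equiv.tsum_eq (stmt17_equiv M) (fun m : {m : ℕ // M < m} => ((1:ℝ)/3) ^ (m : ℕ))]
  have h : ∀ n : ℕ, ((1:ℝ)/3) ^ ((stmt17_equiv M n : ℕ)) = ((1:ℝ)/3)^(M+1) * ((1:ℝ)/3)^n := by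
    intro n
    simp only [stmt17_equiv, Equiv.coe_fn_mk]
    ring
  rw [tsum_congr h, tsum_mul_left, tsum_geometric_of_lt_one (by norm_num) (by norm_num)]
  have h3 : Real.exp (-(M:ℝ)) = ((1:ℝ)/Real.exp 1) ^ M := by
    rw [one_div, inv_pow, ← Real.exp_nat_mul, ← Real.exp_neg]
    norm_num
  have he : Real.exp 1 ≤ 3 := Real.exp_one_lt_d9.le.trans (by norm_num)
  have hpos : (0:ℝ) < Real.exp 1 := Real.exp_pos 1
  have hle : ((1:ℝ)/3) ^ M ≤ ((1:ℝ)/Real.exp 1) ^ M := by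
    apply pow_le_pow_left₀ (by norm_num)
    rw [div_le_div_iff₀ (by norm_num) hpos]
    linarith
  rw [h3]
  calc ((1:ℝ)/3)^(M+1) * (1 - 1/3)⁻¹ = ((1:ℝ)/3)^M * (1/2) := by ring
    _ ≤ ((1:ℝ)/Real.exp 1)^M * 1 :=
        mul_le_mul hle (by norm_num) (by norm_num) (by positivity)
    _ = ((1:ℝ)/Real.exp 1)^M := by ring

set_option maxHeartbeats 1000000 in
/-- Tail estimate `E₂`: with `M = ⌊log N/(c log log N)⌋` and `k ≤ c₀ log N/(log log N)²`,
one has `∑_{m > M} (2k)^m (C log m)^m / m! ≪ e^{-M}` provided `6 C c c₀ ≤ e^{-1}`. -/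
theorem stmt_17 (c c₀ C : ℝ) (hc : 0 < c) (hc₀ : 0 < c₀) (hC : 0 < C)
    (hsmall : 6 * C * c * c₀ ≤ Real.exp (-1)) :
    ∃ K N₀ : ℝ, ∀ N : ℝ, N₀ ≤ N → ∀ k : ℝ, 0 ≤ k →
      k ≤ c₀ * Real.log N / (Real.log (Real.log N)) ^ 2 →
      (∑' m : {m : ℕ // ⌊Real.log N / (c * Real.log (Real.log N))⌋₊ < m},
          (2 * k) ^ (m : ℕ) / (Nat.factorial m : ℝ) * (C * Real.log m) ^ (m : ℕ))
        ≤ K * Real.exp (-(⌊Real.log N / (c * Real.log (Real.log N))⌋₊ : ℝ)) := by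
  have hev : ∀ᶠ x : ℝ in atTop,
      1/c ≤ Real.log x ∧ Real.log x ≤ x / (c * Real.exp 1) ∧ 1 ≤ x := by
    have h1 : ∀ᶠ x : ℝ in atTop, 1/c ≤ Real.log x :=
      Real.tendsto_log_atTop.eventually_ge_atTop _
    have h2 : ∀ᶠ x : ℝ in atTop, Real.log x ≤ x / (c * Real.exp 1) := by
      have hε : (0:ℝ) < 1 / (c * Real.exp 1) := by positivity
      filter_upwards [Real.isLittleO_log_id_atTop.bound hε, eventually_ge_atTop (0:ℝ)]
        with x hx hx0
      have h := le_trans (le_abs_self _) hx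
      simp only [Real.norm_eq_abs, id_eq, abs_of_nonneg hx0] at h
      rw [div_eq_inv_mul, ← one_div]
      exact h
    filter_upwards [h1, h2, eventually_ge_atTop (1:ℝ)] with x a b d using ⟨a, b, d⟩
  obtain ⟨N₀, hN₀⟩ := (Real.tendsto_log_atTop.eventually hev).exists_forall_of_atTop
  refine ⟨1, N₀, ?_⟩
  intro N hN k hk hkle
  obtain ⟨hℓ1, hℓ2, hL1⟩ := hN₀ N hN
  set L := Real.log N with hLdef
  set ℓ := Real.log L with hℓdef
  set M := ⌊L / (c * ℓ)⌋₊ with hMdef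
  have hℓpos : 0 < ℓ := lt_of_lt_of_le (by positivity) hℓ1
  have hcℓ : 1 ≤ c * ℓ := by
    have := (div_le_iff₀ hc).mp hℓ1
    nlinarith
  have hcℓpos : 0 < c * ℓ := by positivity
  have hLpos : 0 < L := by linarith
  have hexp1pos : (0:ℝ) < Real.exp 1 := Real.exp_pos 1
  have hexp1ge : (2:ℝ) ≤ Real.exp 1 := by
    have := Real.add_one_le_exp (1:ℝ); linarith
  have hybound : Real.exp 1 ≤ L / (c * ℓ) := by
    rw [le_div_iff₀ hcℓpos]
    have h := (le_div_iff₀ (by positivity : (0:ℝ) < c * Real.exp 1)).mp hℓ2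
    nlinarith
  have hypos : 0 < L / (c * ℓ) := by positivity
  -- key pointwise bound
  have key : ∀ m : {m : ℕ // M < m},
      (2 * k) ^ (m : ℕ) / (Nat.factorial m : ℝ) * (C * Real.log m) ^ (m : ℕ)
        ≤ ((1:ℝ)/3) ^ (m : ℕ) := by
    rintro ⟨m, hm⟩
    simp only
    have hmge : L / (c * ℓ) ≤ (m : ℝ) := by
      have h1 := Nat.lt_floor_add_one (L / (c * ℓ))
      have hm' : (M:ℝ) + 1 ≤ (m:ℝ) := by exact_mod_cast hm
      linarith
    have hme : Real.exp 1 ≤ (m : ℝ) := le_trans hybound hmge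
    have hm1 : (1:ℝ) ≤ (m:ℝ) := by linarith
    have hmpos : (0:ℝ) < (m:ℝ) := by linarith
    have hlog0 : 0 ≤ Real.log m := Real.log_nonneg hm1
    have hanti : Real.log (m:ℝ) / (m:ℝ) ≤ Real.log (L/(c*ℓ)) / (L/(c*ℓ)) :=
      Real.log_div_self_antitoneOn (Set.mem_setOf.mpr hybound)
        (Set.mem_setOf.mpr hme) hmge
    have hylog : Real.log (L/(c*ℓ)) ≤ ℓ := by
      rw [hℓdef]
      exact Real.log_le_log hypos (div_le_self hLpos.le hcℓ)
    have hstep : Real.log (L/(c*ℓ)) / (L/(c*ℓ)) ≤ c * ℓ^2 / L := by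
      rw [div_le_iff₀ hypos]
      have heq : c * ℓ^2 / L * (L/(c*ℓ)) = ℓ := by field_simp
      rw [heq]; exact hylog
    have hlogm : Real.log m / m ≤ c * ℓ^2 / L := hanti.trans hstep
    have hlogm' : Real.log m ≤ c * ℓ^2 / L * m := (div_le_iff₀ hmpos).mp hlogm
    -- a := 2 * k * (C * log m) ≤ m / (3 * exp 1)
    have habd : 2 * k * (C * Real.log m) ≤ (m:ℝ) / (3 * Real.exp 1) := by
      have s1 : 2 * k * (C * Real.log m) ≤ 2 * C * k * (c * ℓ^2 / L * m) := by
        have := mul_le_mul_of_nonneg_left hlogm' (by positivity : (0:ℝ) ≤ 2 * C * k)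
        nlinarith
      have s2 : 2 * C * k * (c * ℓ^2 / L) ≤ 2 * C * (c₀ * L / ℓ^2) * (c * ℓ^2 / L) := by
        have h1 : (0:ℝ) ≤ 2 * C * (c * ℓ^2 / L) := by positivity
        nlinarith
      have s3 : 2 * C * (c₀ * L / ℓ^2) * (c * ℓ^2 / L) = 2 * C * c * c₀ := by
        field_simp
      have s4 : 2 * C * c * c₀ ≤ 1 / (3 * Real.exp 1) := by
        rw [Real.exp_neg] at hsmall
        rw [le_div_iff₀ (by positivity)]
        have h1 : Real.exp 1 * (6 * C * c * c₀) ≤ Real.exp 1 * (Real.exp 1)⁻¹ :=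
          mul_le_mul_of_nonneg_left hsmall hexp1pos.le
        rw [mul_inv_cancel₀ (ne_of_gt hexp1pos)] at h1
        nlinarith
      have s5 : 2 * C * k * (c * ℓ^2 / L) * m ≤ 1 / (3 * Real.exp 1) * m := by
        have := s2.trans (le_of_eq s3) |>.trans s4
        exact mul_le_mul_of_nonneg_right this hmpos.le
      calc 2 * k * (C * Real.log m) ≤ 2 * C * k * (c * ℓ^2 / L * m) := s1
        _ = 2 * C * k * (c * ℓ^2 / L) * m := by ring
        _ ≤ 1 / (3 * Real.exp 1) * m := s5
        _ = (m:ℝ) / (3 * Real.exp 1) := by ring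
    have ha0 : 0 ≤ 2 * k * (C * Real.log m) := by positivity
    have hfacpos : (0:ℝ) < (Nat.factorial m : ℝ) := by
      exact_mod_cast Nat.factorial_pos m
    calc (2 * k) ^ m / (Nat.factorial m : ℝ) * (C * Real.log m) ^ m
        = (2 * k * (C * Real.log m)) ^ m / (Nat.factorial m : ℝ) := by
          rw [mul_pow]; ring
      _ ≤ ((m:ℝ) / (3 * Real.exp 1)) ^ m / (Nat.factorial m : ℝ) := by
          exact (div_le_div_iff_of_pos_right hfacpos).mpr (pow_le_pow_left₀ ha0 habd m)
      _ = (m:ℝ)^m / (Nat.factorial m : ℝ) * ((1:ℝ) / (3 * Real.exp 1)) ^ m := by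
          rw [div_pow, div_pow]; ring
      _ ≤ Real.exp (m:ℝ) * ((1:ℝ) / (3 * Real.exp 1)) ^ m := by
          apply mul_le_mul_of_nonneg_right
            (Real.pow_div_factorial_le_exp (x := (m:ℝ)) hmpos.le m) (by positivity)
      _ = ((1:ℝ)/3) ^ m := by
          have hexpm : Real.exp ((m:ℕ):ℝ) = Real.exp 1 ^ (m:ℕ) := by
            rw [← Real.exp_nat_mul, mul_one]
          rw [hexpm, div_pow, div_pow, mul_pow]
          field_simp
  -- summability
  have hgsum : Summable (fun m : {m : ℕ // M < m} => ((1:ℝ)/3) ^ (m : ℕ)) := by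
    apply Summable.subtype (f := fun n : ℕ => ((1:ℝ)/3) ^ n)
    exact summable_geometric_of_lt_one (by norm_num) (by norm_num)
  have hnonneg : ∀ m : {m : ℕ // M < m},
      0 ≤ (2 * k) ^ (m : ℕ) / (Nat.factorial m : ℝ) * (C * Real.log m) ^ (m : ℕ) := by
    rintro ⟨m, hm⟩
    have hm1 : (1:ℝ) ≤ (m:ℝ) := by exact_mod_cast Nat.one_le_iff_ne_zero.mpr (by omega)
    have hlog0 : 0 ≤ Real.log m := Real.log_nonneg hm1
    positivity
  have hfsum : Summable (fun m : {m : ℕ // M < m} =>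
      (2 * k) ^ (m : ℕ) / (Nat.factorial m : ℝ) * (C * Real.log m) ^ (m : ℕ)) :=
    Summable.of_nonneg_of_le hnonneg key hgsum
  calc (∑' m : {m : ℕ // M < m},
        (2 * k) ^ (m : ℕ) / (Nat.factorial m : ℝ) * (C * Real.log m) ^ (m : ℕ))
      ≤ ∑' m : {m : ℕ // M < m}, ((1:ℝ)/3) ^ (m : ℕ) := Summable.tsum_le_tsum key hfsum hgsum
    _ ≤ Real.exp (-(M:ℝ)) := stmt17_geom M
    _ = 1 * Real.exp (-(M:ℝ)) := (one_mul _).symm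
end
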